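/- For every ρ with 0 < ρ ≤ π, the volume of the geodesic ball of radius ρ in the projective model of S²×R, namely the integral of (x² + y² + z²)^{−3/2} over the image F((0, ρ) × (−π/2, π/2) × (−π, π)) with respect to Lebesgue measure on ℝ³, equals 2π ∫₀^ρ ∫_{−π/2}^{π/2} τ sin(τ cos v) dv dτ. -/

import Mathlib

open Real Set MeasureTheory

/-- The geodesic polar parametrization `F (τ, v, u)` of `S²×R` in the projective model. -/
noncomputable def F (p : ℝ × ℝ × ℝ) : ℝ × ℝ × ℝ :=
  (Real.exp (p.1 * Real.sin p.2.1) * Real.cos (p.1 * Real.cos p.2.1),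
   Real.exp (p.1 * Real.sin p.2.1) * Real.sin (p.1 * Real.cos p.2.1) * Real.cos p.2.2,
   Real.exp (p.1 * Real.sin p.2.1) * Real.sin (p.1 * Real.cos p.2.1) * Real.sin p.2.2)


noncomputable def e3 : (ℝ × ℝ × ℝ) ≃ₗ[ℝ] (Fin 3 → ℝ) where
  toFun p := ![p.1, p.2.1, p.2.2]
  invFun f := (f 0, f 1, f 2)
  map_add' p q := by ext i; fin_cases i <;> simp
  map_smul' c p := by ext i; fin_cases i <;> simp
  left_inv p := rfl
  right_inv f := by ext i; fin_cases i <;> simp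

noncomputable def b3 : Module.Basis (Fin 3) ℝ (ℝ × ℝ × ℝ) := Module.Basis.ofEquivFun e3

noncomputable def row (a b c : ℝ) : (ℝ × ℝ × ℝ) →L[ℝ] ℝ :=
  a • (ContinuousLinearMap.fst ℝ ℝ (ℝ × ℝ)) +
  b • ((ContinuousLinearMap.fst ℝ ℝ ℝ).comp (ContinuousLinearMap.snd ℝ ℝ (ℝ × ℝ))) +
  c • ((ContinuousLinearMap.snd ℝ ℝ ℝ).comp (ContinuousLinearMap.snd ℝ ℝ (ℝ × ℝ)))

@[simp] lemma row_apply (a b c : ℝ) (q : ℝ × ℝ × ℝ) :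
    row a b c q = a * q.1 + b * q.2.1 + c * q.2.2 := by
  simp [row]

noncomputable def J (a b c d e f g h i : ℝ) : (ℝ × ℝ × ℝ) →L[ℝ] (ℝ × ℝ × ℝ) :=
  (row a b c).prod ((row d e f).prod (row g h i))

lemma J_det (a b c d e f g h i : ℝ) :
    (J a b c d e f g h i).det =
      a * (e * i - f * h) - b * (d * i - f * g) + c * (d * h - e * g) := by
  have : (J a b c d e f g h i).det = LinearMap.det ((J a b c d e f g h i) : (ℝ×ℝ×ℝ) →ₗ[ℝ] (ℝ×ℝ×ℝ)) := rfl
  rw [this, ← LinearMap.det_toMatrix b3, Matrix.det_fin_three]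
  have hs3 : ∀ x, e3.symm x = (x 0, x 1, x 2) := fun _ => rfl
  have ht3 : ∀ p, e3 p = ![p.1, p.2.1, p.2.2] := fun _ => rfl
  simp [LinearMap.toMatrix_apply, b3, hs3, ht3, J, Module.Basis.coe_ofEquivFun]
  ring

noncomputable def Jac (p : ℝ × ℝ × ℝ) : (ℝ × ℝ × ℝ) →L[ℝ] (ℝ × ℝ × ℝ) :=
  J (Real.exp (p.1 * Real.sin p.2.1) * (Real.sin p.2.1 * Real.cos (p.1 * Real.cos p.2.1) - Real.cos p.2.1 * Real.sin (p.1 * Real.cos p.2.1)))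
    (Real.exp (p.1 * Real.sin p.2.1) * p.1 * (Real.cos p.2.1 * Real.cos (p.1 * Real.cos p.2.1) + Real.sin p.2.1 * Real.sin (p.1 * Real.cos p.2.1)))
    0
    (Real.exp (p.1 * Real.sin p.2.1) * (Real.sin p.2.1 * Real.sin (p.1 * Real.cos p.2.1) + Real.cos p.2.1 * Real.cos (p.1 * Real.cos p.2.1)) * Real.cos p.2.2)
    (Real.exp (p.1 * Real.sin p.2.1) * p.1 * (Real.cos p.2.1 * Real.sin (p.1 * Real.cos p.2.1) - Real.sin p.2.1 * Real.cos (p.1 * Real.cos p.2.1)) * Real.cos p.2.2)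
    (-(Real.exp (p.1 * Real.sin p.2.1) * Real.sin (p.1 * Real.cos p.2.1) * Real.sin p.2.2))
    (Real.exp (p.1 * Real.sin p.2.1) * (Real.sin p.2.1 * Real.sin (p.1 * Real.cos p.2.1) + Real.cos p.2.1 * Real.cos (p.1 * Real.cos p.2.1)) * Real.sin p.2.2)
    (Real.exp (p.1 * Real.sin p.2.1) * p.1 * (Real.cos p.2.1 * Real.sin (p.1 * Real.cos p.2.1) - Real.sin p.2.1 * Real.cos (p.1 * Real.cos p.2.1)) * Real.sin p.2.2)
    (Real.exp (p.1 * Real.sin p.2.1) * Real.sin (p.1 * Real.cos p.2.1) * Real.cos p.2.2)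

lemma hasFDerivAt_F (p : ℝ × ℝ × ℝ) : HasFDerivAt F (Jac p) p := by
  have hτ : HasFDerivAt (fun q : ℝ × ℝ × ℝ => q.1) (ContinuousLinearMap.fst ℝ ℝ (ℝ × ℝ)) p :=
    hasFDerivAt_fst
  have hv : HasFDerivAt (fun q : ℝ × ℝ × ℝ => q.2.1)
      ((ContinuousLinearMap.fst ℝ ℝ ℝ).comp (ContinuousLinearMap.snd ℝ ℝ (ℝ × ℝ))) p :=
    hasFDerivAt_fst.comp p hasFDerivAt_snd
  have hu : HasFDerivAt (fun q : ℝ × ℝ × ℝ => q.2.2)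
      ((ContinuousLinearMap.snd ℝ ℝ ℝ).comp (ContinuousLinearMap.snd ℝ ℝ (ℝ × ℝ))) p :=
    hasFDerivAt_snd.comp p hasFDerivAt_snd
  have hA : HasFDerivAt (fun q : ℝ × ℝ × ℝ => q.1 * Real.sin q.2.1) _ p := hτ.mul hv.sin
  have hB : HasFDerivAt (fun q : ℝ × ℝ × ℝ => q.1 * Real.cos q.2.1) _ p := hτ.mul hv.cos
  have h1 := hA.exp.mul hB.cos
  have h2 := (hA.exp.mul hB.sin).mul hu.cos
  have h3 := (hA.exp.mul hB.sin).mul hu.sin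
  have := h1.prodMk (h2.prodMk h3)
  refine this.congr_fderiv ?_
  apply ContinuousLinearMap.ext
  intro q
  refine Prod.ext ?_ (Prod.ext ?_ ?_)
  all_goals
    simp only [Jac, J, F, ContinuousLinearMap.prod_apply, ContinuousLinearMap.add_apply,
      ContinuousLinearMap.coe_smul', Pi.smul_apply, ContinuousLinearMap.smul_apply,
      ContinuousLinearMap.coe_comp', Function.comp_apply, ContinuousLinearMap.coe_fst',
      ContinuousLinearMap.coe_snd', row_apply, smul_eq_mul, Pi.mul_apply]
  all_goals ring

lemma F_normsq (p : ℝ × ℝ × ℝ) :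
    (F p).1 ^ 2 + (F p).2.1 ^ 2 + (F p).2.2 ^ 2 = Real.exp (p.1 * Real.sin p.2.1) ^ 2 := by
  have h1 := Real.sin_sq_add_cos_sq p.2.2
  have h2 := Real.sin_sq_add_cos_sq (p.1 * Real.cos p.2.1)
  simp only [F]
  calc (Real.exp (p.1 * Real.sin p.2.1) * Real.cos (p.1 * Real.cos p.2.1)) ^ 2 +
        (Real.exp (p.1 * Real.sin p.2.1) * Real.sin (p.1 * Real.cos p.2.1) * Real.cos p.2.2) ^ 2 +
        (Real.exp (p.1 * Real.sin p.2.1) * Real.sin (p.1 * Real.cos p.2.1) * Real.sin p.2.2) ^ 2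
      = Real.exp (p.1 * Real.sin p.2.1) ^ 2 *
          (Real.sin (p.1 * Real.cos p.2.1) ^ 2 * (Real.sin p.2.2 ^ 2 + Real.cos p.2.2 ^ 2)
            + Real.cos (p.1 * Real.cos p.2.1) ^ 2) := by ring
    _ = Real.exp (p.1 * Real.sin p.2.1) ^ 2 := by rw [h1, mul_one, h2, mul_one]

lemma kzero {k : ℤ} (h : |(k : ℝ)| < 1) : k = 0 := by
  have h2 : |k| < 1 := by exact_mod_cast h
  rw [abs_lt] at h2
  omega

lemma angle_eq {u u' : ℝ} (hu : u ∈ Ioo (-π) π) (hu' : u' ∈ Ioo (-π) π)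
    (hc : Real.cos u = Real.cos u') (hs : Real.sin u = Real.sin u') : u = u' := by
  obtain ⟨hu1, hu2⟩ := hu
  obtain ⟨hu1', hu2'⟩ := hu'
  obtain ⟨k, hk | hk⟩ := Real.cos_eq_cos_iff.mp hc
  · have hk0 : k = 0 := by
      refine kzero ?_
      rw [abs_lt]
      constructor <;> nlinarith [Real.pi_pos]
    subst hk0
    simp only [Int.cast_zero, mul_zero, zero_mul, zero_add] at hk
    exact hk.symm
  · have hk0 : k = 0 := by
      refine kzero ?_
      rw [abs_lt]
      constructor <;> nlinarith [Real.pi_pos]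
    subst hk0
    simp only [Int.cast_zero, mul_zero, zero_mul, zero_sub] at hk
    subst hk
    rw [Real.sin_neg] at hs
    have h0 : Real.sin u = 0 := by linarith
    have : u = 0 := (Real.sin_eq_zero_iff_of_lt_of_lt hu1 hu2).mp h0
    simp [this]

set_option maxHeartbeats 1000000 in
lemma F_injOn {ρ : ℝ} (hρπ : ρ ≤ π) :
    InjOn F (Ioo 0 ρ ×ˢ Ioo (-(π/2)) (π/2) ×ˢ Ioo (-π) π) := by
  rintro ⟨τ, v, u⟩ ⟨hτ, hv, hu⟩ ⟨τ', v', u'⟩ ⟨hτ', hv', hu'⟩ heq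
  simp only [mem_Ioo] at hτ hv hu hτ' hv' hu'
  have hcv : 0 < Real.cos v := Real.cos_pos_of_mem_Ioo ⟨by linarith [hv.1], hv.2⟩
  have hcv' : 0 < Real.cos v' := Real.cos_pos_of_mem_Ioo ⟨by linarith [hv'.1], hv'.2⟩
  have hθ1 : 0 < τ * Real.cos v := mul_pos hτ.1 hcv
  have hθ2 : τ * Real.cos v < π := by
    nlinarith [Real.cos_le_one v, hτ.1, hτ.2]
  have hθ1' : 0 < τ' * Real.cos v' := mul_pos hτ'.1 hcv'
  have hθ2' : τ' * Real.cos v' < π := by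
    nlinarith [Real.cos_le_one v', hτ'.1, hτ'.2]
  -- equality of exponentials
  have hnorm : Real.exp (τ * Real.sin v) ^ 2 = Real.exp (τ' * Real.sin v') ^ 2 := by
    have h := F_normsq (⟨τ, v, u⟩ : ℝ × ℝ × ℝ)
    have h' := F_normsq (⟨τ', v', u'⟩ : ℝ × ℝ × ℝ)
    rw [heq] at h
    simp only at h h'
    linarith
  have hE : Real.exp (τ * Real.sin v) = Real.exp (τ' * Real.sin v') := by
    nlinarith [Real.exp_pos (τ * Real.sin v), Real.exp_pos (τ' * Real.sin v')]
  have ha : τ * Real.sin v = τ' * Real.sin v' := Real.exp_injective hE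
  have hEpos := Real.exp_pos (τ * Real.sin v)
  have h1 := congrArg Prod.fst heq
  have h2 := congrArg (fun p : ℝ × ℝ × ℝ => p.2.1) heq
  have h3 := congrArg (fun p : ℝ × ℝ × ℝ => p.2.2) heq
  simp only [F] at h1 h2 h3
  rw [← hE] at h1 h2 h3
  have hcosθ : Real.cos (τ * Real.cos v) = Real.cos (τ' * Real.cos v') :=
    mul_left_cancel₀ (ne_of_gt hEpos) h1
  have hb : τ * Real.cos v = τ' * Real.cos v' :=
    Real.injOn_cos ⟨le_of_lt hθ1, le_of_lt hθ2⟩ ⟨le_of_lt hθ1', le_of_lt hθ2'⟩ hcosθ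
  have hττ : τ = τ' := by
    have e1 : τ ^ 2 = (τ * Real.sin v) ^ 2 + (τ * Real.cos v) ^ 2 := by
      linear_combination (-(τ ^ 2)) * Real.sin_sq_add_cos_sq v
    have e2 : τ' ^ 2 = (τ' * Real.sin v') ^ 2 + (τ' * Real.cos v') ^ 2 := by
      linear_combination (-(τ' ^ 2)) * Real.sin_sq_add_cos_sq v'
    have hsq : τ ^ 2 = τ' ^ 2 := by rw [e1, e2, ha, hb]
    by_contra hne
    rcases lt_or_gt_of_ne hne with hlt | hlt
    · nlinarith [hτ.1, hτ'.1]
    · nlinarith [hτ.1, hτ'.1]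
  subst hττ
  have hvv : v = v' := by
    have hsv : Real.sin v = Real.sin v' := mul_left_cancel₀ (ne_of_gt hτ.1) ha
    exact Real.injOn_sin ⟨le_of_lt hv.1, le_of_lt hv.2⟩ ⟨le_of_lt hv'.1, le_of_lt hv'.2⟩ hsv
  subst hvv
  have hSpos : 0 < Real.sin (τ * Real.cos v) := Real.sin_pos_of_pos_of_lt_pi hθ1 hθ2
  rw [mul_assoc, mul_assoc] at h2 h3
  have hcu : Real.cos u = Real.cos u' :=
    mul_left_cancel₀ (ne_of_gt hSpos) (mul_left_cancel₀ (ne_of_gt hEpos) h2)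
  have hsu : Real.sin u = Real.sin u' :=
    mul_left_cancel₀ (ne_of_gt hSpos) (mul_left_cancel₀ (ne_of_gt hEpos) h3)
  have := angle_eq ⟨hu.1, hu.2⟩ ⟨hu'.1, hu'.2⟩ hcu hsu
  simp [this]

lemma Jac_det (p : ℝ × ℝ × ℝ) :
    (Jac p).det =
      -(p.1 * Real.exp (p.1 * Real.sin p.2.1) ^ 3 * Real.sin (p.1 * Real.cos p.2.1)) := by
  rw [Jac, J_det]
  linear_combination
    (-(Real.exp (p.1 * Real.sin p.2.1) ^ 3 * p.1 * Real.sin (p.1 * Real.cos p.2.1)) *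
        ((Real.sin p.2.1 ^ 2 + Real.cos p.2.1 ^ 2) *
          (Real.sin (p.1 * Real.cos p.2.1) ^ 2 + Real.cos (p.1 * Real.cos p.2.1) ^ 2))) *
      Real.sin_sq_add_cos_sq p.2.2 +
    (-(Real.exp (p.1 * Real.sin p.2.1) ^ 3 * p.1 * Real.sin (p.1 * Real.cos p.2.1)) *
        (Real.sin (p.1 * Real.cos p.2.1) ^ 2 + Real.cos (p.1 * Real.cos p.2.1) ^ 2)) *
      Real.sin_sq_add_cos_sq p.2.1 +
    (-(Real.exp (p.1 * Real.sin p.2.1) ^ 3 * p.1 * Real.sin (p.1 * Real.cos p.2.1))) *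
      Real.sin_sq_add_cos_sq (p.1 * Real.cos p.2.1)

instance : (volume : Measure (ℝ × ℝ × ℝ)).IsAddHaarMeasure := by
  rw [show (volume : Measure (ℝ × ℝ × ℝ)) = (volume : Measure ℝ).prod (volume : Measure (ℝ × ℝ)) from
    MeasureTheory.Measure.volume_eq_prod ..]
  infer_instance

set_option maxHeartbeats 1000000 in
/-- For `0 < ρ ≤ π`, the volume of the geodesic ball of radius `ρ` in the projective model
of `S²×R` — the integral of `(x² + y² + z²)^{-3/2}` over the region
`F((0,ρ) × (−π/2,π/2) × (−π,π))` with respect to Lebesgue measure — equals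
`2π ∫₀^ρ ∫_{−π/2}^{π/2} τ sin(τ cos v) dv dτ`. -/
theorem volume_geodesic_ball :
    ∀ ρ : ℝ, 0 < ρ → ρ ≤ π →
      (∫ p in F '' (Ioo 0 ρ ×ˢ Ioo (-(π/2)) (π/2) ×ˢ Ioo (-π) π),
          (p.1 ^ 2 + p.2.1 ^ 2 + p.2.2 ^ 2) ^ (-(3 : ℝ) / 2)) =
        2 * π * ∫ τ in (0 : ℝ)..ρ, ∫ v in (-(π/2))..(π/2), τ * Real.sin (τ * Real.cos v) := by
  intro ρ hρ hρπ
  have hs : MeasurableSet (Ioo (0:ℝ) ρ ×ˢ Ioo (-(π/2)) (π/2) ×ˢ Ioo (-π) π) :=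
    measurableSet_Ioo.prod (measurableSet_Ioo.prod measurableSet_Ioo)
  rw [integral_image_eq_integral_abs_det_fderiv_smul volume hs
      (fun x _ => (hasFDerivAt_F x).hasFDerivWithinAt) (F_injOn hρπ)]
  have hpt : EqOn
      (fun x : ℝ × ℝ × ℝ => |(Jac x).det| •
        ((F x).1 ^ 2 + (F x).2.1 ^ 2 + (F x).2.2 ^ 2) ^ (-(3 : ℝ) / 2))
      (fun x : ℝ × ℝ × ℝ => x.1 * Real.sin (x.1 * Real.cos x.2.1))
      (Ioo (0:ℝ) ρ ×ˢ Ioo (-(π/2)) (π/2) ×ˢ Ioo (-π) π) := by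
    rintro ⟨τ, v, u⟩ ⟨hτ, hv, hu⟩
    simp only [mem_Ioo] at hτ hv hu
    have hcv : 0 < Real.cos v := Real.cos_pos_of_mem_Ioo ⟨by linarith [hv.1], hv.2⟩
    have hθ1 : 0 < τ * Real.cos v := mul_pos hτ.1 hcv
    have hθ2 : τ * Real.cos v < π := by nlinarith [Real.cos_le_one v, hτ.1, hτ.2]
    have hSpos : 0 < Real.sin (τ * Real.cos v) := Real.sin_pos_of_pos_of_lt_pi hθ1 hθ2
    have hEpos : 0 < Real.exp (τ * Real.sin v) := Real.exp_pos _
    have hw : ((F (τ, v, u)).1 ^ 2 + (F (τ, v, u)).2.1 ^ 2 + (F (τ, v, u)).2.2 ^ 2)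
        ^ (-(3 : ℝ) / 2) = (Real.exp (τ * Real.sin v) ^ 3)⁻¹ := by
      have h0 := F_normsq (⟨τ, v, u⟩ : ℝ × ℝ × ℝ)
      simp only at h0
      rw [h0, ← Real.rpow_natCast (Real.exp (τ * Real.sin v)) 2,
        ← Real.rpow_mul hEpos.le]
      norm_num
    have hdet : |(Jac (τ, v, u)).det|
        = τ * Real.exp (τ * Real.sin v) ^ 3 * Real.sin (τ * Real.cos v) := by
      rw [Jac_det]
      simp only
      rw [abs_neg, abs_of_pos (mul_pos (mul_pos hτ.1 (pow_pos hEpos 3)) hSpos)]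
    show |(Jac (τ, v, u)).det| • ((F (τ, v, u)).1 ^ 2 + (F (τ, v, u)).2.1 ^ 2
        + (F (τ, v, u)).2.2 ^ 2) ^ (-(3 : ℝ) / 2) = τ * Real.sin (τ * Real.cos v)
    rw [smul_eq_mul, hw, hdet]
    field_simp
  rw [setIntegral_congr_fun hs hpt]
  -- Fubini
  have hcont : Continuous (fun x : ℝ × ℝ × ℝ => x.1 * Real.sin (x.1 * Real.cos x.2.1)) := by
    fun_prop
  have hK : IsCompact (Icc (0:ℝ) ρ ×ˢ Icc (-(π/2)) (π/2) ×ˢ Icc (-π) π) :=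
    isCompact_Icc.prod (isCompact_Icc.prod isCompact_Icc)
  have hint : IntegrableOn (fun x : ℝ × ℝ × ℝ => x.1 * Real.sin (x.1 * Real.cos x.2.1))
      (Ioo (0:ℝ) ρ ×ˢ Ioo (-(π/2)) (π/2) ×ˢ Ioo (-π) π) volume := by
    refine (hcont.continuousOn.integrableOn_compact hK).mono_set ?_
    exact prod_mono Ioo_subset_Icc_self (prod_mono Ioo_subset_Icc_self Ioo_subset_Icc_self)
  rw [MeasureTheory.Measure.volume_eq_prod] at hint ⊢
  rw [setIntegral_prod _ hint]
  have hinner : ∀ τ ∈ Ioo (0:ℝ) ρ,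
      (∫ y in Ioo (-(π/2)) (π/2) ×ˢ Ioo (-π) π,
        τ * Real.sin (τ * Real.cos y.1) ∂(volume : Measure (ℝ × ℝ))) =
      2 * π * ∫ v in Ioo (-(π/2)) (π/2), τ * Real.sin (τ * Real.cos v) := by
    intro τ hτ
    rw [MeasureTheory.Measure.volume_eq_prod]
    have hint2 : IntegrableOn (fun y : ℝ × ℝ => τ * Real.sin (τ * Real.cos y.1))
        (Ioo (-(π/2)) (π/2) ×ˢ Ioo (-π) π) (volume.prod volume) := by
      have hc2 : Continuous (fun y : ℝ × ℝ => τ * Real.sin (τ * Real.cos y.1)) := by fun_prop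
      rw [← MeasureTheory.Measure.volume_eq_prod]
      have hK2 : IsCompact (Icc (-(π/2):ℝ) (π/2) ×ˢ Icc (-π) π) :=
        isCompact_Icc.prod isCompact_Icc
      refine (hc2.continuousOn.integrableOn_compact hK2).mono_set ?_
      exact prod_mono Ioo_subset_Icc_self Ioo_subset_Icc_self
    rw [setIntegral_prod _ hint2]
    have hu : ∀ v : ℝ, (∫ _ in Ioo (-π) π, τ * Real.sin (τ * Real.cos v)) =
        2 * π * (τ * Real.sin (τ * Real.cos v)) := by
      intro v
      rw [setIntegral_const, measureReal_def, Real.volume_Ioo, smul_eq_mul,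
        ENNReal.toReal_ofReal (by linarith [Real.pi_pos] : (0:ℝ) ≤ π - -π)]
      ring
    rw [setIntegral_congr_fun measurableSet_Ioo (fun v _ => hu v), MeasureTheory.integral_const_mul]
  rw [setIntegral_congr_fun measurableSet_Ioo hinner, MeasureTheory.integral_const_mul]
  congr 1
  rw [intervalIntegral.integral_of_le hρ.le, MeasureTheory.integral_Ioc_eq_integral_Ioo]
  refine setIntegral_congr_fun measurableSet_Ioo fun τ _ => ?_
  rw [intervalIntegral.integral_of_le (by linarith [Real.pi_pos] : -(π/2) ≤ π/2),
    MeasureTheory.integral_Ioc_eq_integral_Ioo]
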